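/- If A is a nonnegative m×n real matrix, then the spectral p-norm ‖A‖_p tends to the sum of all entries of A as p → ∞. -/

import Mathlib

/-- The spectral p-norm of a real m×n matrix. -/
noncomputable def specNormR (m n : ℕ) (p : ℝ) (A : Matrix (Fin m) (Fin n) ℝ) : ℝ :=
  sSup {t : ℝ | ∃ (x : Fin n → ℝ) (y : Fin m → ℝ),
    (∑ j, |x j| ^ p) = 1 ∧ (∑ i, |y i| ^ p) = 1 ∧
    t = ∑ i, ∑ j, A i j * x j * y i}

section aux
variable (m n : ℕ) (A : Matrix (Fin m) (Fin n) ℝ)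

lemma abs_le_one_of_sum (p : ℝ) (hp : 0 < p) (x : Fin n → ℝ)
    (hx : (∑ j, |x j| ^ p) = 1) (j : Fin n) : |x j| ≤ 1 := by
  by_contra h
  push_neg at h
  have h1 : (1:ℝ) < |x j| ^ p :=
    (Real.one_lt_rpow_iff_of_pos (by positivity)).mpr (Or.inl ⟨h, hp⟩)
  have hle : |x j| ^ p ≤ ∑ j', |x j'| ^ p :=
    Finset.single_le_sum (f := fun j' => |x j'| ^ p) (fun j' _ => by positivity) (Finset.mem_univ j)
  rw [hx] at hle; linarith

lemma upper_bd (hA : ∀ i j, 0 ≤ A i j) (p : ℝ) (hp : 0 < p) :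
    ∀ t ∈ {t : ℝ | ∃ (x : Fin n → ℝ) (y : Fin m → ℝ),
      (∑ j, |x j| ^ p) = 1 ∧ (∑ i, |y i| ^ p) = 1 ∧
      t = ∑ i, ∑ j, A i j * x j * y i}, t ≤ ∑ i, ∑ j, A i j := by
  rintro t ⟨x, y, hx, hy, rfl⟩
  apply Finset.sum_le_sum; intro i _
  apply Finset.sum_le_sum; intro j _
  calc A i j * x j * y i ≤ |A i j * x j * y i| := le_abs_self _
    _ = A i j * |x j| * |y i| := by rw [abs_mul, abs_mul, abs_of_nonneg (hA i j)]
    _ ≤ A i j * 1 * 1 := by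
        apply mul_le_mul (mul_le_mul le_rfl (abs_le_one_of_sum n p hp x hx j) (abs_nonneg _) (hA i j))
          (abs_le_one_of_sum m p hp y hy i) (abs_nonneg _) (mul_nonneg (hA i j) zero_le_one)
    _ = A i j := by ring

end aux

/-- For nonnegative A, ‖A‖_p → ∑_{i,j} a_{ij} as p → ∞. -/
theorem stmt_5 (m n : ℕ) (A : Matrix (Fin m) (Fin n) ℝ)
    (hA : ∀ i j, 0 ≤ A i j) :
    Filter.Tendsto (fun p : ℝ => specNormR m n p A) Filter.atTop
      (nhds (∑ i, ∑ j, A i j)) := by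
  set S := ∑ i, ∑ j, A i j with hS
  have hS0 : 0 ≤ S := Finset.sum_nonneg fun i _ => Finset.sum_nonneg fun j _ => hA i j
  rcases Nat.eq_zero_or_pos m with hm | hm
  · subst hm
    have : S = 0 := by simp [hS]
    rw [this]
    have h2 : ∀ p : ℝ, specNormR 0 n p A = 0 := by
      intro p
      unfold specNormR
      convert Real.sSup_empty using 2
      ext t
      simp only [Set.mem_setOf_eq, Set.mem_empty_iff_false, iff_false]
      rintro ⟨x, y, hx, hy, _⟩
      simp at hy
    simp only [h2]; exact tendsto_const_nhds
  rcases Nat.eq_zero_or_pos n with hn | hn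
  · subst hn
    have : S = 0 := by simp [hS]
    rw [this]
    have h2 : ∀ p : ℝ, specNormR m 0 p A = 0 := by
      intro p
      unfold specNormR
      convert Real.sSup_empty using 2
      ext t
      simp only [Set.mem_setOf_eq, Set.mem_empty_iff_false, iff_false]
      rintro ⟨x, y, hx, hy, _⟩
      simp at hx
    simp only [h2]; exact tendsto_const_nhds
  -- main case
  have hn0 : (0:ℝ) < n := by exact_mod_cast hn
  have hm0 : (0:ℝ) < m := by exact_mod_cast hm
  -- lower bound witness
  have hlow : ∀ p : ℝ, 0 < p →
      S * ((n:ℝ) ^ (-(1/p)) * (m:ℝ) ^ (-(1/p))) ≤ specNormR m n p A := by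
    intro p hp
    apply le_csSup
    · exact ⟨S, upper_bd m n A hA p hp⟩
    · refine ⟨fun _ => (n:ℝ) ^ (-(1/p)), fun _ => (m:ℝ) ^ (-(1/p)), ?_, ?_, ?_⟩
      · have habs : |(n:ℝ) ^ (-(1/p))| = (n:ℝ) ^ (-(1/p)) := abs_of_nonneg (by positivity)
        simp only [habs, ← Real.rpow_natCast ((n:ℝ) ^ (-(1/p))) , Finset.sum_const, Finset.card_univ,
          Fintype.card_fin, nsmul_eq_mul]
        rw [← Real.rpow_mul hn0.le]
        rw [neg_mul, one_div, inv_mul_cancel₀ hp.ne', Real.rpow_neg_one]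
        exact mul_inv_cancel₀ hn0.ne'
      · have habs : |(m:ℝ) ^ (-(1/p))| = (m:ℝ) ^ (-(1/p)) := abs_of_nonneg (by positivity)
        simp only [habs, Finset.sum_const, Finset.card_univ, Fintype.card_fin, nsmul_eq_mul]
        rw [← Real.rpow_mul hm0.le]
        rw [neg_mul, one_div, inv_mul_cancel₀ hp.ne', Real.rpow_neg_one]
        exact mul_inv_cancel₀ hm0.ne'
      · rw [hS, Finset.sum_mul]
        apply Finset.sum_congr rfl; intro i _
        rw [Finset.sum_mul]
        apply Finset.sum_congr rfl; intro j _
        ring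
  have hup : ∀ p : ℝ, 0 < p → specNormR m n p A ≤ S := by
    intro p hp
    exact Real.sSup_le (upper_bd m n A hA p hp) hS0
  -- squeeze
  have hglim : Filter.Tendsto (fun p : ℝ => S * ((n:ℝ) ^ (-(1/p)) * (m:ℝ) ^ (-(1/p))))
      Filter.atTop (nhds S) := by
    have h1 : Filter.Tendsto (fun p : ℝ => -(1/p)) Filter.atTop (nhds 0) := by
      simpa using (tendsto_inv_atTop_zero (𝕜 := ℝ)).neg
    have hcn : Filter.Tendsto (fun p : ℝ => (n:ℝ) ^ (-(1/p))) Filter.atTop (nhds 1) := by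
      have := (Real.continuousAt_const_rpow (b := (0:ℝ)) hn0.ne').tendsto.comp h1
      simpa [Function.comp_def] using this
    have hcm : Filter.Tendsto (fun p : ℝ => (m:ℝ) ^ (-(1/p))) Filter.atTop (nhds 1) := by
      have := (Real.continuousAt_const_rpow (b := (0:ℝ)) hm0.ne').tendsto.comp h1
      simpa [Function.comp_def] using this
    have := (tendsto_const_nhds (x := S) (f := Filter.atTop (α := ℝ))).mul (hcn.mul hcm)
    simpa using this
  refine tendsto_of_tendsto_of_tendsto_of_le_of_le' hglim tendsto_const_nhds ?_ ?_
  · filter_upwards [Filter.eventually_gt_atTop 0] with p hp using hlow p hp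
  · filter_upwards [Filter.eventually_gt_atTop 0] with p hp using hup p hp
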